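/- Let $H$ be a nonzero harmonic polynomial on $\mathbb{R}^3$ and let $A(x)=A_1x_1+A_2x_2+A_3x_3$ be a nonzero linear form. Then $H$ is not divisible (in the polynomial ring) by $A^2$. -/
import Mathlib
open MvPolynomial

private lemma pd_pow (i : Fin 3) (A : MvPolynomial (Fin 3) ℝ) (n : ℕ) :
    pderiv i (A ^ (n+1)) = C ((n:ℝ)+1) * A ^ n * pderiv i A := by
  induction n with
  | zero => simp
  | succ n ih =>
      rw [pow_succ, pderiv_mul, ih]
      push_cast
      simp only [C_add, C_1]
      ring

private lemma pd_pow_mul (i : Fin 3) (A R : MvPolynomial (Fin 3) ℝ) (n : ℕ) :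
    pderiv i (A ^ (n+1) * R) =
      C ((n:ℝ)+1) * A ^ n * pderiv i A * R + A ^ (n+1) * pderiv i R := by
  rw [pderiv_mul, pd_pow]

private lemma lap_term (i : Fin 3) (A R : MvPolynomial (Fin 3) ℝ) (a : ℝ)
    (hA : pderiv i A = C a) (n : ℕ) :
    pderiv i (pderiv i (A ^ (n+2) * R)) =
      A ^ n * (C (((n:ℝ)+2)*((n:ℝ)+1)*a^2) * R
        + A * (C (2*((n:ℝ)+2)*a) * pderiv i R + A * pderiv i (pderiv i R))) := by
  have h1 : pderiv i (A ^ (n + 2) * R)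
      = C (((n:ℝ)+2) * a) * (A ^ (n+1) * R) + A ^ (n+2) * pderiv i R := by
    have h := pd_pow_mul i A R (n+1)
    rw [hA] at h
    push_cast at h
    rw [show ((n:ℝ) + 1 + 1) = (n:ℝ) + 2 by ring] at h
    rw [h, C_mul]; ring
  have h2 := pd_pow_mul i A R n
  have h3 := pd_pow_mul i A (pderiv i R) (n+1)
  rw [hA] at h2 h3
  push_cast at h3
  rw [h1, map_add, pderiv_C_mul, h2, h3]
  simp only [C_mul, C_add, C_1, C_pow, map_ofNat]
  ring

set_option maxHeartbeats 1000000 in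
/-- A nonzero harmonic polynomial on ℝ³ is not divisible by the square of a
nonzero linear form. -/
theorem stmt_2 (H : MvPolynomial (Fin 3) ℝ) (hH : H ≠ 0)
    (hharm : pderiv 0 (pderiv 0 H) + pderiv 1 (pderiv 1 H) + pderiv 2 (pderiv 2 H) = 0)
    (A₁ A₂ A₃ : ℝ) (hA : ¬(A₁ = 0 ∧ A₂ = 0 ∧ A₃ = 0)) :
    ¬ ((C A₁ * X 0 + C A₂ * X 1 + C A₃ * X 2) ^ 2 ∣ H) := by
  intro hdvd
  set A : MvPolynomial (Fin 3) ℝ := C A₁ * X 0 + C A₂ * X 1 + C A₃ * X 2 with hAdef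
  have hpd0 : pderiv (0 : Fin 3) A = C A₁ := by simp [hAdef, pderiv_X, Pi.single_apply]
  have hpd1 : pderiv (1 : Fin 3) A = C A₂ := by simp [hAdef, pderiv_X, Pi.single_apply]
  have hpd2 : pderiv (2 : Fin 3) A = C A₃ := by simp [hAdef, pderiv_X, Pi.single_apply]
  have hs : A₁^2 + A₂^2 + A₃^2 ≠ 0 := by
    intro h
    exact hA ⟨by nlinarith [sq_nonneg A₁, sq_nonneg A₂, sq_nonneg A₃],
      by nlinarith [sq_nonneg A₁, sq_nonneg A₂, sq_nonneg A₃],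
      by nlinarith [sq_nonneg A₁, sq_nonneg A₂, sq_nonneg A₃]⟩
  have hA0 : A ≠ 0 := by
    intro h
    apply hA
    have e1 := congrArg (eval (Pi.single (0:Fin 3) (1:ℝ))) h
    have e2 := congrArg (eval (Pi.single (1:Fin 3) (1:ℝ))) h
    have e3 := congrArg (eval (Pi.single (2:Fin 3) (1:ℝ))) h
    simp [hAdef, Pi.single_apply] at e1 e2 e3
    exact ⟨e1, e2, e3⟩
  have hAunit : ¬ IsUnit A := by
    intro h
    obtain ⟨B, hB⟩ := h.exists_right_inv
    have := congrArg (eval (0 : Fin 3 → ℝ)) hB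
    simp [hAdef] at this
  -- key induction
  have key : ∀ n : ℕ, A ^ (n+2) ∣ H := by
    intro n
    induction n with
    | zero => exact hdvd
    | succ n ih =>
        obtain ⟨R, hR⟩ := ih
        have hlap := hharm
        rw [hR, lap_term 0 A R A₁ hpd0 n, lap_term 1 A R A₂ hpd1 n,
          lap_term 2 A R A₃ hpd2 n] at hlap
        set G : MvPolynomial (Fin 3) ℝ :=
          C (2*((n:ℝ)+2)) * (C A₁ * pderiv 0 R + C A₂ * pderiv 1 R + C A₃ * pderiv 2 R)
          + A * (pderiv 0 (pderiv 0 R) + pderiv 1 (pderiv 1 R) + pderiv 2 (pderiv 2 R))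
          with hGdef
        have h0 : A ^ n * (C ((((n:ℝ)+2)*((n:ℝ)+1))*(A₁^2+A₂^2+A₃^2)) * R + A * G) = 0 := by
          rw [← hlap, hGdef]
          simp only [C_mul, C_add, C_1, C_pow, map_ofNat]
          ring
        have hE : C ((((n:ℝ)+2)*((n:ℝ)+1))*(A₁^2+A₂^2+A₃^2)) * R + A * G = 0 := by
          rcases mul_eq_zero.mp h0 with h | h
          · exact absurd h (pow_ne_zero _ hA0)
          · exact h
        have hc : (((n:ℝ)+2)*((n:ℝ)+1))*(A₁^2+A₂^2+A₃^2) ≠ 0 := by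
          apply mul_ne_zero _ hs
          positivity
        have hRS : R = A * (C (((((n:ℝ)+2)*((n:ℝ)+1))*(A₁^2+A₂^2+A₃^2))⁻¹) * (-G)) := by
          have : R = C ((((((n:ℝ)+2)*((n:ℝ)+1))*(A₁^2+A₂^2+A₃^2))⁻¹)
              * ((((n:ℝ)+2)*((n:ℝ)+1))*(A₁^2+A₂^2+A₃^2))) * R := by
            rw [inv_mul_cancel₀ hc, C_1, one_mul]
          rw [C_mul] at this
          calc R = _ := this
          _ = C (((((n:ℝ)+2)*((n:ℝ)+1))*(A₁^2+A₂^2+A₃^2))⁻¹)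
              * (C ((((n:ℝ)+2)*((n:ℝ)+1))*(A₁^2+A₂^2+A₃^2)) * R) := by ring
          _ = C (((((n:ℝ)+2)*((n:ℝ)+1))*(A₁^2+A₂^2+A₃^2))⁻¹) * (-(A * G)) := by
              rw [eq_neg_of_add_eq_zero_left hE]
          _ = A * (C (((((n:ℝ)+2)*((n:ℝ)+1))*(A₁^2+A₂^2+A₃^2))⁻¹) * (-G)) := by ring
        rw [hR, show n+1+2 = n+2+1 from rfl, pow_succ]
        exact mul_dvd_mul_left (A^(n+2)) ⟨_, hRS⟩
  obtain ⟨m, b, hb, hfac⟩ := WfDvdMonoid.max_power_factor' hH hAunit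
  have h2 : A ^ (m+2) ∣ A ^ m * b := hfac ▸ key m
  have h3 : A ^ 2 ∣ b := by
    rw [show A ^ (m+2) = A ^ m * A ^ 2 by ring] at h2
    exact (mul_dvd_mul_iff_left (pow_ne_zero m hA0)).mp h2
  exact hb (dvd_trans (dvd_pow_self A two_ne_zero) h3)
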